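/- Let X, Y be locally compact Hausdorff spaces and S : C₀(X) → C₀(Y) a bounded linear map with ‖Sf‖ = ‖f‖ for all f ∈ C₀(X)₊, whose range strongly separates points of Y (for distinct y₁, y₂ there is f with |Sf(y₁)| ≠ |Sf(y₂)|). Then there exist a homeomorphism ψ from X onto ψ(X) ⊆ Y and a continuous unimodular function k : X → ℂ such that Sf(ψ(x)) = k(x)f(x) for all f ∈ C₀(X) and x ∈ X. -/

import Mathlib

open scoped ZeroAtInfty ComplexOrder
open scoped ZeroAtInfty ComplexOrder
open Filter Topology

section Aux
variable {X : Type*} [TopologicalSpace X]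

theorem c0_compact_le (g : C₀(X, ℂ)) {c : ℝ} (hc : 0 < c) : IsCompact {y | c ≤ ‖g y‖} := by
  have h := g.zero_at_infty'
  have h2 : ∀ᶠ y in cocompact X, ‖g y‖ < c := by
    have := Metric.tendsto_nhds.mp h c hc
    filter_upwards [this] with y hy
    simpa [dist_eq_norm] using hy
  obtain ⟨K, hK, hKs⟩ := mem_cocompact.mp h2
  apply hK.of_isClosed_subset
  · exact isClosed_le continuous_const (continuous_norm.comp (map_continuous g))
  · intro y hy
    by_contra hyK
    have := hKs hyK
    simp only [Set.mem_setOf_eq] at hy this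
    linarith

theorem c0_norm_le (g : C₀(X, ℂ)) {C : ℝ} (hC : 0 ≤ C) (h : ∀ y, ‖g y‖ ≤ C) : ‖g‖ ≤ C := by
  rw [← ZeroAtInftyContinuousMap.norm_toBCF_eq_norm]
  exact (g.toBCF.norm_le hC).2 h

theorem c0_le_norm (g : C₀(X, ℂ)) (y : X) : ‖g y‖ ≤ ‖g‖ := by
  rw [← ZeroAtInftyContinuousMap.norm_toBCF_eq_norm]
  exact g.toBCF.norm_coe_le_norm y

theorem c0_exists_norm_eq (g : C₀(X, ℂ)) (hg : g ≠ 0) : ∃ y, ‖g y‖ = ‖g‖ := by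
  have hgpos : 0 < ‖g‖ := norm_pos_iff.mpr hg
  have hK : IsCompact {y | ‖g‖ / 2 ≤ ‖g y‖} := c0_compact_le g (by linarith)
  have hne : ({y | ‖g‖ / 2 ≤ ‖g y‖}).Nonempty := by
    by_contra h
    rw [Set.not_nonempty_iff_eq_empty] at h
    have : ‖g‖ ≤ ‖g‖ / 2 := by
      apply c0_norm_le g (by linarith)
      intro y
      by_contra hy
      exact Set.eq_empty_iff_forall_notMem.mp h y (le_of_lt (lt_of_not_ge hy))
    linarith
  obtain ⟨y₀, hy₀K, hy₀⟩ := hK.exists_isMaxOn hne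
    ((continuous_norm.comp (map_continuous g)).continuousOn)
  refine ⟨y₀, le_antisymm (c0_le_norm g y₀) ?_⟩
  apply c0_norm_le g (norm_nonneg _)
  intro y
  by_cases hy : ‖g‖ / 2 ≤ ‖g y‖
  · exact hy₀ hy
  · calc ‖g y‖ ≤ ‖g‖ / 2 := le_of_not_ge hy
      _ ≤ ‖g y₀‖ := hy₀K

theorem cx_eq_of_norm_add {a b : ℂ} (ha : ‖a‖ = 1) (hb : ‖b‖ = 1) (hab : ‖a + b‖ = 2) :
    a = b := by
  have := parallelogram_law_with_norm ℝ a b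
  rw [ha, hb, hab] at this
  have h0 : ‖a - b‖ = 0 := by nlinarith [norm_nonneg (a - b)]
  exact sub_eq_zero.mp (norm_eq_zero.mp h0)

theorem cx_nonneg_eq {z : ℂ} (h : 0 ≤ z) : z = (‖z‖ : ℂ) := by
  obtain ⟨hre, him⟩ := Complex.nonneg_iff.mp h
  have : z = (z.re : ℂ) := by
    apply Complex.ext <;> simp [him.symm]
  rw [this, show ‖((z.re : ℝ) : ℂ)‖ = |z.re| from (by rw [Complex.norm_real, Real.norm_eq_abs]), abs_of_nonneg hre]

/-- A compactly supported real continuous function as an element of `C₀(X, ℂ)`. -/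
noncomputable def toC0 (e : C(X, ℝ)) (he : HasCompactSupport e) : C₀(X, ℂ) :=
  ⟨⟨fun x => (e x : ℂ), Complex.continuous_ofReal.comp e.continuous⟩, by
    have h := he.is_zero_at_infty
    have : Tendsto (fun x => (e x : ℂ)) (cocompact X) (𝓝 ((0 : ℝ) : ℂ)) :=
      (Complex.continuous_ofReal.tendsto 0).comp h
    simpa using this⟩

@[simp] theorem toC0_apply (e : C(X, ℝ)) (he : HasCompactSupport e) (x : X) :
    toC0 e he x = (e x : ℂ) := rfl

/-- compose with a real function vanishing at 0 with linear bound -/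
noncomputable def comp0 (u : C₀(X, ℂ)) (g : ℂ → ℝ) (hg : Continuous g)
    (hbd : ∀ z, |g z| ≤ ‖z‖) : C₀(X, ℂ) :=
  ⟨⟨fun x => (g (u x) : ℂ), Complex.continuous_ofReal.comp (hg.comp (map_continuous u))⟩, by
    apply squeeze_zero_norm (a := fun x => ‖u x‖)
    · intro x
      simpa using hbd (u x)
    · exact tendsto_norm_zero.comp u.zero_at_infty'⟩

@[simp] theorem comp0_apply (u : C₀(X, ℂ)) (g : ℂ → ℝ) (hg : Continuous g)
    (hbd : ∀ z, |g z| ≤ ‖z‖) (x : X) : comp0 u g hg hbd x = (g (u x) : ℂ) := rfl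

/-- The set of "peaking" functions at `x`. -/
def PP (x : X) : Set C₀(X, ℂ) :=
  {f | (∀ z, 0 ≤ f z) ∧ (∀ z, ‖f z‖ ≤ 1) ∧ f x = 1}

variable [LocallyCompactSpace X] [T2Space X]

theorem exists_peak (x : X) {U : Set X} (hU : IsOpen U) (hxU : x ∈ U) :
    ∃ e : C₀(X, ℂ), e ∈ PP x ∧ (∀ z, e z ≠ 0 → z ∈ U) ∧
      ∃ V : Set X, IsOpen V ∧ x ∈ V ∧ ∀ z ∈ V, e z = 1 := by
  obtain ⟨K, hK, hxK, hKU⟩ := exists_compact_subset hU hxU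
  obtain ⟨e, he1, he0, hec, he01⟩ := exists_continuous_one_zero_of_isCompact hK
    hU.isClosed_compl (by simpa [Set.disjoint_compl_right_iff_subset] using hKU)
  refine ⟨toC0 e hec, ⟨?_, ?_, ?_⟩, ?_, interior K, isOpen_interior, hxK, ?_⟩
  · intro z
    simp only [toC0_apply]
    exact Complex.zero_le_real.mpr (he01 z).1
  · intro z
    simp only [toC0_apply]
    rw [show ‖((e z : ℝ) : ℂ)‖ = |e z| from (by rw [Complex.norm_real, Real.norm_eq_abs]), abs_of_nonneg (he01 z).1]
    exact (he01 z).2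
  · have : e x = 1 := he1 (interior_subset hxK)
    simp [this]
  · intro z hz
    by_contra hzU
    apply hz
    simp [he0 hzU]
  · intro z hz
    have : e z = 1 := he1 (interior_subset hz)
    simp [this]

theorem PP_nonempty (x : X) : (PP x).Nonempty := by
  obtain ⟨e, he, _⟩ := exists_peak x isOpen_univ (Set.mem_univ x)
  exact ⟨e, he⟩

theorem PP_norm_one {x : X} {f : C₀(X, ℂ)} (hf : f ∈ PP x) : ‖f‖ = 1 := by
  refine le_antisymm (c0_norm_le f zero_le_one hf.2.1) ?_
  have := c0_le_norm f x
  rw [hf.2.2] at this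
  simpa using this

theorem PP_avg {x : X} {f g : C₀(X, ℂ)} (hf : f ∈ PP x) (hg : g ∈ PP x) :
    ((1 / 2 : ℂ) • (f + g)) ∈ PP x := by
  obtain ⟨hf0, hf1, hfx⟩ := hf
  obtain ⟨hg0, hg1, hgx⟩ := hg
  refine ⟨fun z => ?_, fun z => ?_, ?_⟩
  · have h1 := hf0 z
    have h2 := hg0 z
    rw [Complex.nonneg_iff] at h1 h2 ⊢
    simp only [ZeroAtInftyContinuousMap.coe_smul, ZeroAtInftyContinuousMap.coe_add,
      Pi.smul_apply, Pi.add_apply, smul_eq_mul]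
    constructor
    · simp [Complex.mul_re, Complex.add_re, Complex.add_im]
      nlinarith [h1.1, h2.1]
    · simp [Complex.mul_im, Complex.add_re, Complex.add_im, ← h1.2, ← h2.2]
  · simp only [ZeroAtInftyContinuousMap.coe_smul, ZeroAtInftyContinuousMap.coe_add,
      Pi.smul_apply, Pi.add_apply, smul_eq_mul]
    calc ‖(1 / 2 : ℂ) * (f z + g z)‖ = (1 / 2) * ‖f z + g z‖ := by
          rw [norm_mul]; norm_num
      _ ≤ (1 / 2) * (‖f z‖ + ‖g z‖) := by
          have := norm_add_le (f z) (g z); linarith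
      _ ≤ 1 := by have := hf1 z; have := hg1 z; linarith
  · simp only [ZeroAtInftyContinuousMap.coe_smul, ZeroAtInftyContinuousMap.coe_add,
      Pi.smul_apply, Pi.add_apply, smul_eq_mul, hfx, hgx]
    norm_num

end Aux

section Main
variable {X Y : Type*} [TopologicalSpace X] [LocallyCompactSpace X] [T2Space X]
    [TopologicalSpace Y] [LocallyCompactSpace Y] [T2Space Y]
    (S : C₀(X, ℂ) →L[ℂ] C₀(Y, ℂ))
    (hiso : ∀ f : C₀(X, ℂ), (∀ x, 0 ≤ f x) → ‖S f‖ = ‖f‖)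

include hiso

theorem S_PP_norm {x : X} {f : C₀(X, ℂ)} (hf : f ∈ PP x) : ‖S f‖ = 1 := by
  rw [hiso f hf.1, PP_norm_one hf]

theorem S_avg_eval {x : X} {f g : C₀(X, ℂ)} (hf : f ∈ PP x) (hg : g ∈ PP x) (y : Y)
    (h : ‖S ((1 / 2 : ℂ) • (f + g)) y‖ = 1) : ‖S f y + S g y‖ = 2 := by
  have : S ((1 / 2 : ℂ) • (f + g)) y = (1 / 2 : ℂ) * (S f y + S g y) := by
    simp [map_smul, map_add]
  rw [this] at h
  rw [norm_mul] at h
  have h12 : ‖(1 / 2 : ℂ)‖ = 1 / 2 := by norm_num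
  rw [h12] at h
  linarith

theorem point_exists (x : X) :
    ∃ (y : Y) (c : ℂ), ‖c‖ = 1 ∧ ∀ f : C₀(X, ℂ), S f y = c * f x := by
  classical
  -- the compact "peak sets"
  have hTne : ∀ f : PP x, ({y | ‖S f.1 y‖ = 1}).Nonempty := by
    rintro ⟨f, hf⟩
    have h1 : ‖S f‖ = 1 := S_PP_norm S hiso hf
    have : S f ≠ 0 := by intro h; rw [h] at h1; simp at h1
    obtain ⟨y, hy⟩ := c0_exists_norm_eq _ this
    exact ⟨y, by simp only [Set.mem_setOf_eq]; rw [hy, h1]⟩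
  have hle1 : ∀ (f : C₀(X, ℂ)), f ∈ PP x → ∀ y, ‖S f y‖ ≤ 1 := by
    intro f hf y
    have := c0_le_norm (S f) y
    rwa [S_PP_norm S hiso hf] at this
  haveI : Nonempty (PP x) := (PP_nonempty x).to_subtype
  have hint : (⋂ f : PP x, {y | ‖S f.1 y‖ = 1}).Nonempty := by
    apply IsCompact.nonempty_iInter_of_directed_nonempty_isCompact_isClosed
    · rintro ⟨f, hf⟩ ⟨g, hg⟩
      refine ⟨⟨_, PP_avg hf hg⟩, ?_, ?_⟩ <;>
      · intro y hy
        simp only [Set.mem_setOf_eq] at hy ⊢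
        have h2 := S_avg_eval S hiso hf hg y hy
        have hfy := hle1 f hf y
        have hgy := hle1 g hg y
        have htri := norm_add_le (S f y) (S g y)
        first
          | linarith
          | linarith
    · exact hTne
    · rintro ⟨f, hf⟩
      have : {y | ‖S f y‖ = 1} = {y | 1 ≤ ‖S f y‖} := by
        ext y
        simp only [Set.mem_setOf_eq]
        constructor
        · intro h; linarith
        · intro h; exact le_antisymm (hle1 f hf y) h
      rw [this]
      exact c0_compact_le _ one_pos
    · rintro ⟨f, hf⟩
      exact isClosed_eq (continuous_norm.comp (map_continuous (S f))) continuous_const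
  obtain ⟨y, hy⟩ := hint
  simp only [Set.mem_iInter, Set.mem_setOf_eq, Subtype.forall] at hy
  -- the constant c
  obtain ⟨e₀, he₀⟩ := PP_nonempty x
  set c := S e₀ y with hc_def
  have hcnorm : ‖c‖ = 1 := hy e₀ he₀
  have hc : ∀ f ∈ PP x, S f y = c := by
    intro f hf
    have havg := hy _ (PP_avg hf he₀)
    have h2 := S_avg_eval S hiso hf he₀ y havg
    exact cx_eq_of_norm_add (hy f hf) hcnorm h2
  -- vanishing lemma for nonnegative functions
  have hvan0 : ∀ u : C₀(X, ℂ), (∀ z, 0 ≤ u z) → ∀ V : Set X, IsOpen V → x ∈ V →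
      (∀ z ∈ V, u z = 0) → S u y = 0 := by
    intro u hu V hV hxV huV
    obtain ⟨e, hePP, heSupp, -⟩ := exists_peak x hV hxV
    set M : ℝ := ‖u‖ + 1 with hM_def
    have hM : 0 < M := by positivity
    set u' : C₀(X, ℂ) := ((M⁻¹ : ℝ) : ℂ) • u with hu'_def
    have hu'_apply : ∀ z, u' z = ((M⁻¹ : ℝ) : ℂ) * u z := fun z => rfl
    have hmem : u' + e ∈ PP x := by
      refine ⟨fun z => ?_, fun z => ?_, ?_⟩
      · have h1 : (0 : ℂ) ≤ u' z := by
          rw [hu'_apply, cx_nonneg_eq (hu z)]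
          rw [show ((M⁻¹ : ℝ) : ℂ) * ((‖u z‖ : ℝ) : ℂ) = ((M⁻¹ * ‖u z‖ : ℝ) : ℂ) by push_cast; ring]
          exact Complex.zero_le_real.mpr (by positivity)
        have h2 : (0 : ℂ) ≤ e z := hePP.1 z
        calc (0:ℂ) ≤ u' z := h1
          _ ≤ u' z + e z := le_add_of_nonneg_right h2
      · show ‖u' z + e z‖ ≤ 1
        by_cases hez : e z = 0
        · rw [hez, add_zero, hu'_apply, norm_mul]
          have : ‖((M⁻¹ : ℝ) : ℂ)‖ = M⁻¹ := by
            rw [show ‖((M⁻¹:ℝ):ℂ)‖ = |M⁻¹| from (by rw [Complex.norm_real, Real.norm_eq_abs]), abs_of_pos (by positivity)]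
          rw [this]
          have h3 : ‖u z‖ ≤ ‖u‖ := c0_le_norm u z
          have h4 : M⁻¹ * ‖u z‖ ≤ M⁻¹ * ‖u‖ := by
            apply mul_le_mul_of_nonneg_left h3 (by positivity)
          have h5 : M⁻¹ * ‖u‖ ≤ 1 := by
            rw [inv_mul_le_iff₀ hM, hM_def]; nlinarith [norm_nonneg u]
          linarith
        · have hzV := heSupp z hez
          rw [hu'_apply, huV z hzV, mul_zero, zero_add]
          exact hePP.2.1 z
      · show u' x + e x = 1
        rw [hu'_apply, huV x hxV, mul_zero, zero_add, hePP.2.2]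
    have h1 : S (u' + e) y = c := hc _ hmem
    rw [map_add] at h1
    have h2 : S u' y + S e y = c := by
      have : (S u' + S e) y = S u' y + S e y := rfl
      rw [← this]; exact h1
    have h3 : S u' y = 0 := by
      rw [hc e hePP] at h2
      linear_combination h2
    have : S u y = ((M : ℝ) : ℂ) * S u' y := by
      have hMne : ((M : ℝ) : ℂ) ≠ 0 := by
        simp only [ne_eq, Complex.ofReal_eq_zero]; linarith
      have : ((M : ℝ) : ℂ) • u' = u := by
        rw [hu'_def, smul_smul]
        rw [show ((M : ℝ) : ℂ) * ((M⁻¹ : ℝ) : ℂ) = 1 by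
          push_cast; field_simp]
        simp
      conv_lhs => rw [← this]
      rw [map_smul]
      rfl
    rw [this, h3, mul_zero]
  -- vanishing lemma, general
  have hvan : ∀ u : C₀(X, ℂ), ∀ V : Set X, IsOpen V → x ∈ V →
      (∀ z ∈ V, u z = 0) → S u y = 0 := by
    intro u V hV hxV huV
    set a := comp0 u Complex.re Complex.continuous_re (fun z => Complex.abs_re_le_norm z) with ha
    set b := comp0 u Complex.im Complex.continuous_im (fun z => Complex.abs_im_le_norm z) with hb
    set w := comp0 u (fun z => ‖z‖) continuous_norm (fun z => by simp) with hw
    have hwa : ∀ z, 0 ≤ (w + a) z := by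
      intro z
      show 0 ≤ ((‖u z‖ : ℝ) : ℂ) + (((u z).re : ℝ) : ℂ)
      rw [show ((‖u z‖ : ℝ) : ℂ) + (((u z).re : ℝ) : ℂ) = ((‖u z‖ + (u z).re : ℝ) : ℂ) by push_cast; ring]
      apply Complex.zero_le_real.mpr
      have h1 := abs_le.mp (Complex.abs_re_le_norm (u z))
      linarith [h1.1]
    have hwb : ∀ z, 0 ≤ (w + b) z := by
      intro z
      show 0 ≤ ((‖u z‖ : ℝ) : ℂ) + (((u z).im : ℝ) : ℂ)
      rw [show ((‖u z‖ : ℝ) : ℂ) + (((u z).im : ℝ) : ℂ) = ((‖u z‖ + (u z).im : ℝ) : ℂ) by push_cast; ring]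
      apply Complex.zero_le_real.mpr
      have h1 := abs_le.mp (Complex.abs_im_le_norm (u z))
      linarith [h1.1]
    have hw0 : ∀ z, 0 ≤ w z := by
      intro z
      exact Complex.zero_le_real.mpr (norm_nonneg _)
    have hvW : ∀ z ∈ V, w z = 0 := by
      intro z hz; show ((‖u z‖ : ℝ) : ℂ) = 0; rw [huV z hz]; simp
    have hvWA : ∀ z ∈ V, (w + a) z = 0 := by
      intro z hz
      show ((‖u z‖ : ℝ) : ℂ) + (((u z).re : ℝ) : ℂ) = 0
      rw [huV z hz]; simp
    have hvWB : ∀ z ∈ V, (w + b) z = 0 := by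
      intro z hz
      show ((‖u z‖ : ℝ) : ℂ) + (((u z).im : ℝ) : ℂ) = 0
      rw [huV z hz]; simp
    have hSa : S a y = 0 := by
      have h1 := hvan0 (w + a) hwa V hV hxV hvWA
      have h2 := hvan0 w hw0 V hV hxV hvW
      have : S (w + a) y = S w y + S a y := by rw [map_add]; rfl
      rw [this, h2, zero_add] at h1
      exact h1
    have hSb : S b y = 0 := by
      have h1 := hvan0 (w + b) hwb V hV hxV hvWB
      have h2 := hvan0 w hw0 V hV hxV hvW
      have : S (w + b) y = S w y + S b y := by rw [map_add]; rfl
      rw [this, h2, zero_add] at h1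
      exact h1
    have hdecomp : u = a + Complex.I • b := by
      ext z
      show u z = (((u z).re : ℝ) : ℂ) + Complex.I * (((u z).im : ℝ) : ℂ)
      rw [mul_comm]
      exact (Complex.re_add_im (u z)).symm
    rw [hdecomp, map_add, map_smul]
    show S a y + (Complex.I • S b) y = 0
    have : (Complex.I • S b) y = Complex.I * S b y := rfl
    rw [this, hSa, hSb, mul_zero, add_zero]
  -- the main identity
  refine ⟨y, c, hcnorm, fun f => ?_⟩
  have key : ∀ ε : ℝ, 0 < ε → ‖S f y - c * f x‖ ≤ ‖S‖ * ε := by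
    intro ε hε
    have hU : IsOpen {z | ‖f z - f x‖ < ε} :=
      isOpen_lt (((map_continuous f).sub continuous_const).norm) continuous_const
    have hxU : x ∈ {z | ‖f z - f x‖ < ε} := by
      show ‖f x - f x‖ < ε
      simpa using hε
    obtain ⟨e, hePP, heSupp, V, hVopen, hxV, heV⟩ := exists_peak x hU hxU
    have h1 : S (f - f * e) y = 0 := by
      apply hvan _ V hVopen hxV
      intro z hz
      show f z - f z * e z = 0
      rw [heV z hz, mul_one, sub_self]
    have h2 : S f y = S (f * e) y := by
      have := map_sub S f (f * e)
      have heval : S (f - f * e) y = S f y - S (f * e) y := by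
        rw [this]; rfl
      rw [heval] at h1
      exact sub_eq_zero.mp h1
    set g : C₀(X, ℂ) := f * e - (f x) • e with hg_def
    have hg : ‖g‖ ≤ ε := by
      apply c0_norm_le _ hε.le
      intro z
      have hgz : g z = (f z - f x) * e z := by
        show f z * e z - f x * e z = (f z - f x) * e z
        ring
      by_cases hez : e z = 0
      · rw [hgz, hez, mul_zero, norm_zero]; exact hε.le
      · have hzU := heSupp z hez
        rw [hgz, norm_mul]
        have h1 : ‖f z - f x‖ ≤ ε := le_of_lt hzU
        have h2 : ‖e z‖ ≤ 1 := hePP.2.1 z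
        calc ‖f z - f x‖ * ‖e z‖ ≤ ε * 1 :=
            mul_le_mul h1 h2 (norm_nonneg _) hε.le
          _ = ε := mul_one ε
    have h3 : S (f * e) y = S g y + (f x) * c := by
      have hfe : f * e = g + (f x) • e := by
        rw [hg_def]; abel
      rw [hfe, map_add, map_smul]
      show S g y + ((f x) • S e) y = S g y + f x * c
      have : ((f x) • S e) y = f x * S e y := rfl
      rw [this, hc e hePP]
    have h4 : ‖S g y‖ ≤ ‖S‖ * ε := by
      calc ‖S g y‖ ≤ ‖S g‖ := c0_le_norm _ y
        _ ≤ ‖S‖ * ‖g‖ := S.le_opNorm g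
        _ ≤ ‖S‖ * ε := mul_le_mul_of_nonneg_left hg (norm_nonneg S)
    have : S f y - c * f x = S g y := by
      rw [h2, h3, mul_comm c (f x)]
      ring
    rw [this]
    exact h4
  by_contra hne
  have hd : 0 < ‖S f y - c * f x‖ := by
    rw [norm_pos_iff]
    intro h
    exact hne (sub_eq_zero.mp h)
  set d := ‖S f y - c * f x‖ with hd_def
  have hε : 0 < d / (2 * (‖S‖ + 1)) := by positivity
  have := key _ hε
  have hS1 : ‖S‖ ≤ ‖S‖ + 1 := by linarith
  have : d ≤ (‖S‖ + 1) * (d / (2 * (‖S‖ + 1))) := by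
    calc d ≤ ‖S‖ * (d / (2 * (‖S‖ + 1))) := this
      _ ≤ (‖S‖ + 1) * (d / (2 * (‖S‖ + 1))) :=
        mul_le_mul_of_nonneg_right hS1 hε.le
  have heq : (‖S‖ + 1) * (d / (2 * (‖S‖ + 1))) = d / 2 := by
    field_simp
  rw [heq] at this
  linarith

end Main

theorem stmt_17' {X Y : Type*} [TopologicalSpace X] [LocallyCompactSpace X] [T2Space X]
    [TopologicalSpace Y] [LocallyCompactSpace Y] [T2Space Y]
    (S : C₀(X, ℂ) →L[ℂ] C₀(Y, ℂ))
    (hiso : ∀ f : C₀(X, ℂ), (∀ x, 0 ≤ f x) → ‖S f‖ = ‖f‖)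
    (hsep : ∀ y₁ y₂ : Y, y₁ ≠ y₂ → ∃ f : C₀(X, ℂ), ‖S f y₁‖ ≠ ‖S f y₂‖) :
    ∃ (ψ : X → Y) (k : X → ℂ),
      Topology.IsEmbedding ψ ∧ Continuous k ∧ (∀ x, ‖k x‖ = 1) ∧
      ∀ (f : C₀(X, ℂ)) (x : X), S f (ψ x) = k x * f x := by
  classical
  choose ψ k hknorm heq using fun x => point_exists S hiso x
  have hnormfx : ∀ (f : C₀(X, ℂ)) (x : X), ‖S f (ψ x)‖ = ‖f x‖ := by
    intro f x
    rw [heq x f, norm_mul, hknorm x, one_mul]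
  -- continuity of ψ
  have hcontψ : Continuous ψ := by
    rw [continuous_iff_continuousAt]
    intro x₀
    obtain ⟨e, hePP, -, -⟩ := exists_peak x₀ isOpen_univ trivial
    set K : Set Y := {y | (1:ℝ)/2 ≤ ‖S e y‖} with hK_def
    have hK : IsCompact K := c0_compact_le _ (by norm_num)
    have hev : ∀ᶠ x in 𝓝 x₀, ψ x ∈ K := by
      have hopen : IsOpen {x | (1:ℝ)/2 < ‖e x‖} :=
        isOpen_lt continuous_const (map_continuous e).norm
      have hx₀mem : x₀ ∈ {x | (1:ℝ)/2 < ‖e x‖} := by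
        simp only [Set.mem_setOf_eq, hePP.2.2]
        norm_num
      filter_upwards [hopen.mem_nhds hx₀mem] with x hx
      show (1:ℝ)/2 ≤ ‖S e (ψ x)‖
      rw [hnormfx e x]
      exact le_of_lt hx
    by_contra hnot
    unfold ContinuousAt at hnot
    rw [Filter.tendsto_iff_forall_eventually_mem] at hnot
    push_neg at hnot
    obtain ⟨s, hs, hsnot⟩ := hnot
    obtain ⟨V, hVs, hVopen, hxV⟩ := mem_nhds_iff.mp hs
    set G : Filter Y := Filter.map ψ (𝓝 x₀) ⊓ Filter.principal Vᶜ with hG_def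
    have hGne : G.NeBot := by
      rw [hG_def, Filter.inf_principal_neBot_iff]
      intro U hU
      rw [Set.nonempty_iff_ne_empty]
      intro hemp
      have hUV : U ⊆ V := by
        intro u hu
        by_contra huV
        exact Set.eq_empty_iff_forall_notMem.mp hemp u ⟨hu, huV⟩
      apply hsnot
      have : ψ ⁻¹' U ∈ 𝓝 x₀ := hU
      filter_upwards [this] with x hx
      exact fun h => h (hVs (hUV hx))
    have hGK : G ≤ Filter.principal K := by
      rw [Filter.le_principal_iff]
      apply Filter.mem_inf_of_left
      exact Filter.mem_map.mpr hev
    obtain ⟨y, hyK, hy⟩ := hK hGK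
    have hyV : y ∈ Vᶜ := by
      have h1 : ClusterPt y (Filter.principal Vᶜ) := hy.mono inf_le_right
      rw [← mem_closure_iff_clusterPt] at h1
      rwa [hVopen.isClosed_compl.closure_eq] at h1
    have hyeq : y = ψ x₀ := by
      by_contra hyne
      obtain ⟨f, hf⟩ := hsep y (ψ x₀) hyne
      apply hf
      rw [hnormfx f x₀]
      -- show ‖S f y‖ = ‖f x₀‖ using cluster point property
      have hclus : ClusterPt y (Filter.map ψ (𝓝 x₀)) := hy.mono inf_le_left
      have hne2 : (𝓝 y ⊓ Filter.map ψ (𝓝 x₀)).NeBot := hclus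
      set q : Y → ℝ := fun y' => ‖S f y'‖ with hq_def
      have hqcont : Continuous q := (map_continuous (S f)).norm
      have le1 : Filter.map q (𝓝 y ⊓ Filter.map ψ (𝓝 x₀)) ≤ 𝓝 (q y) :=
        le_trans (Filter.map_mono inf_le_left) (hqcont.tendsto y)
      have le2 : Filter.map q (𝓝 y ⊓ Filter.map ψ (𝓝 x₀)) ≤ 𝓝 (‖f x₀‖) := by
        refine le_trans (Filter.map_mono inf_le_right) ?_
        rw [Filter.map_map]
        have hfun : q ∘ ψ = fun x => ‖f x‖ := by
          funext x
          exact hnormfx f x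
        rw [hfun]
        exact (map_continuous f).norm.tendsto x₀
      have : (𝓝 (q y) ⊓ 𝓝 (‖f x₀‖)).NeBot :=
        Filter.neBot_of_le (le_inf le1 le2)
      exact eq_of_nhds_neBot this
    rw [hyeq] at hyV
    exact hyV hxV
  -- injectivity of ψ
  have hinj : Function.Injective ψ := by
    intro x₁ x₂ h
    by_contra hne
    have hx₁U : x₁ ∈ ({x₂} : Set X)ᶜ := by simp [hne]
    obtain ⟨e, hePP, heSupp, -⟩ := exists_peak x₁ (isClosed_singleton.isOpen_compl) hx₁U
    have he2 : e x₂ = 0 := by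
      by_contra he2
      exact (heSupp x₂ he2) rfl
    have h1 : S e (ψ x₁) = k x₁ := by rw [heq x₁ e, hePP.2.2, mul_one]
    have h2 : S e (ψ x₂) = 0 := by rw [heq x₂ e, he2, mul_zero]
    rw [h, h2] at h1
    have := hknorm x₁
    rw [← h1] at this
    simp at this
  -- ψ is inducing
  have hind : Topology.IsInducing ψ := by
    rw [Topology.isInducing_iff_nhds]
    intro x
    refine le_antisymm ?_ ?_
    · exact Filter.map_le_iff_le_comap.mp (hcontψ.tendsto x)
    · intro U hU
      obtain ⟨U', hU'U, hU'open, hxU'⟩ := mem_nhds_iff.mp hU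
      obtain ⟨e, hePP, heSupp, -⟩ := exists_peak x hU'open hxU'
      rw [Filter.mem_comap]
      refine ⟨{y | (1:ℝ)/2 < ‖S e y‖}, ?_, ?_⟩
      · apply IsOpen.mem_nhds
        · exact isOpen_lt continuous_const (map_continuous (S e)).norm
        · show (1:ℝ)/2 < ‖S e (ψ x)‖
          rw [hnormfx e x, hePP.2.2]
          norm_num
      · intro z hz
        simp only [Set.mem_preimage, Set.mem_setOf_eq] at hz
        rw [hnormfx e z] at hz
        have : e z ≠ 0 := by
          intro h0
          rw [h0, norm_zero] at hz
          norm_num at hz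
        exact hU'U (heSupp z this)
  -- continuity of k
  have hcontk : Continuous k := by
    rw [continuous_iff_continuousAt]
    intro x₀
    obtain ⟨e, hePP, -, -⟩ := exists_peak x₀ isOpen_univ trivial
    have hW : IsOpen {x | e x ≠ 0} := by
      have : {x : X | e x ≠ 0} = (⇑e ⁻¹' {0})ᶜ := by
        ext z; simp
      rw [this]
      exact (IsClosed.preimage (map_continuous e) isClosed_singleton).isOpen_compl
    have hx₀W : x₀ ∈ {x | e x ≠ 0} := by
      simp only [Set.mem_setOf_eq, hePP.2.2]
      exact one_ne_zero
    have hR : ContinuousAt (fun x => S e (ψ x) * (e x)⁻¹) x₀ := by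
      apply ContinuousAt.mul
      · exact ((map_continuous (S e)).comp hcontψ).continuousAt
      · apply ContinuousAt.inv₀ (map_continuous e).continuousAt
        rw [hePP.2.2]
        exact one_ne_zero
    apply hR.congr
    filter_upwards [hW.mem_nhds hx₀W] with x hx
    show S e (ψ x) * (e x)⁻¹ = k x
    rw [heq x e, mul_assoc, mul_inv_cancel₀ hx, mul_one]
  exact ⟨ψ, k, ⟨hind, hinj⟩, hcontk, hknorm, fun f x => heq x f⟩


/-- a bounded linear `S : C₀(X) → C₀(Y)` preserving norms of positive
functions, whose range strongly separates points of `Y`, is a weighted composition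
operator `Sf(ψ(x)) = k(x)f(x)` for a homeomorphic embedding `ψ : X → Y` and a continuous
unimodular `k`. -/
theorem stmt_17 {X Y : Type*} [TopologicalSpace X] [LocallyCompactSpace X] [T2Space X]
    [TopologicalSpace Y] [LocallyCompactSpace Y] [T2Space Y]
    (S : C₀(X, ℂ) →L[ℂ] C₀(Y, ℂ))
    (hiso : ∀ f : C₀(X, ℂ), (∀ x, 0 ≤ f x) → ‖S f‖ = ‖f‖)
    (hsep : ∀ y₁ y₂ : Y, y₁ ≠ y₂ → ∃ f : C₀(X, ℂ), ‖S f y₁‖ ≠ ‖S f y₂‖) :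
    ∃ (ψ : X → Y) (k : X → ℂ),
      Topology.IsEmbedding ψ ∧ Continuous k ∧ (∀ x, ‖k x‖ = 1) ∧
      ∀ (f : C₀(X, ℂ)) (x : X), S f (ψ x) = k x * f x := by
  exact stmt_17' S hiso hsep
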